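/- If f is a Hecke-multiplicative function and d is a squarefree positive integer, then for any positive integer m, |f(md)|² ≤ τ(d) · Σ_{ab = d} |f(a)|²·|f(m/b)|², where τ(d) is the number of divisors of d and f(m/b) = 0 if b ∤ m. -/

import Mathlib

open Finset

open ArithmeticFunction
open scoped ArithmeticFunction.Moebius

def HeckeMult (f : ℕ → ℂ) : Prop :=
  f 1 = 1 ∧ ∀ m n : ℕ, 0 < m → 0 < n →
    f m * f n = ∑ d ∈ (Nat.gcd m n).divisors, f (m * n / d ^ 2)

lemma coeff_sum (k : ℕ) (hk : k ≠ 0) :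
    ∑ e ∈ k.divisors.erase 1, (μ (k / e) : ℂ) =
      (if k = 1 then 1 else 0) - (μ k : ℂ) := by
  have h1 : (1:ℕ) ∈ k.divisors := Nat.one_mem_divisors.2 hk
  have hfull : ∑ e ∈ k.divisors, (μ (k / e) : ℂ) = if k = 1 then 1 else 0 := by
    rw [Nat.sum_div_divisors k (fun x => ((μ x : ℤ) : ℂ))]
    have := congrArg (fun F : ArithmeticFunction ℤ => F k) moebius_mul_coe_zeta
    simp only [coe_mul_zeta_apply, one_apply] at this
    rw [← Int.cast_sum, this]
    split <;> simp
  have h2 := Finset.add_sum_erase _ (fun e => (μ (k / e) : ℂ)) h1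
  simp only [Nat.div_one] at h2
  rw [← hfull, ← h2]
  ring

lemma hecke_inv (f : ℕ → ℂ) (hf : HeckeMult f) :
    ∀ d : ℕ, Squarefree d → ∀ m : ℕ, 0 < m →
      f (m * d) = ∑ e ∈ (Nat.gcd m d).divisors, (μ e : ℂ) * (f (m / e) * f (d / e)) := by
  intro d
  induction d using Nat.strong_induction_on with
  | _ d IH =>
  intro hd m hm
  have hd0 : 0 < d := Nat.pos_of_ne_zero hd.ne_zero
  set g := Nat.gcd m d with hg
  have hgm : g ∣ m := Nat.gcd_dvd_left m d
  have hgd : g ∣ d := Nat.gcd_dvd_right m d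
  have hg0 : g ≠ 0 := Nat.gcd_ne_zero_left hm.ne'
  have h1g : (1:ℕ) ∈ g.divisors := Nat.one_mem_divisors.2 hg0
  -- Hecke relation with terms rewritten
  have hheck : f m * f d = ∑ e ∈ g.divisors, f ((m / e) * (d / e)) := by
    rw [hf.2 m d hm hd0]
    refine Finset.sum_congr rfl fun e he => ?_
    obtain ⟨he_dvd, -⟩ := Nat.mem_divisors.mp he
    have hem : e ∣ m := he_dvd.trans hgm
    have hed : e ∣ d := he_dvd.trans hgd
    have he0 : e ≠ 0 := by rintro rfl; simp [Nat.zero_dvd.mp he_dvd] at hg0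
    congr 1
    obtain ⟨a, rfl⟩ := hem
    obtain ⟨b, rfl⟩ := hed
    have : e * a * (e * b) = e ^ 2 * (a * b) := by ring
    rw [this, Nat.mul_div_cancel_left _ (pow_pos (Nat.pos_of_ne_zero he0) 2),
      Nat.mul_div_cancel_left _ (Nat.pos_of_ne_zero he0),
      Nat.mul_div_cancel_left _ (Nat.pos_of_ne_zero he0)]
  -- split off e = 1
  have hsplit : f (m * d) =
      f m * f d - ∑ e ∈ g.divisors.erase 1, f ((m / e) * (d / e)) := by
    rw [hheck, ← Finset.add_sum_erase _ _ h1g]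
    simp
  rw [hsplit]
  -- apply IH inside the erased sum
  have hIH : ∀ e ∈ g.divisors.erase 1,
      f ((m / e) * (d / e)) =
        ∑ c ∈ (g / e).divisors, (μ c : ℂ) * (f (m / (e * c)) * f (d / (e * c))) := by
    intro e he
    obtain ⟨he1, he_mem⟩ := Finset.mem_erase.mp he
    obtain ⟨he_dvd, -⟩ := Nat.mem_divisors.mp he_mem
    have hem : e ∣ m := he_dvd.trans hgm
    have hed : e ∣ d := he_dvd.trans hgd
    have he0 : 0 < e := Nat.pos_of_ne_zero (by rintro rfl; simp [Nat.zero_dvd.mp he_dvd] at hg0)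
    have he2 : 1 < e := lt_of_le_of_ne he0 (Ne.symm he1)
    have hlt : d / e < d := Nat.div_lt_self hd0 he2
    have hsq : Squarefree (d / e) := hd.squarefree_of_dvd (Nat.div_dvd_of_dvd hed)
    have hm' : 0 < m / e := Nat.div_pos (Nat.le_of_dvd hm hem) he0
    have hgcd : Nat.gcd (m / e) (d / e) = g / e := by
      obtain ⟨a, ha⟩ := hem
      obtain ⟨b, hb⟩ := hed
      rw [ha, hb, Nat.mul_div_cancel_left _ he0, Nat.mul_div_cancel_left _ he0]
      rw [hg, ha, hb, Nat.gcd_mul_left, Nat.mul_div_cancel_left _ he0]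
    rw [IH (d / e) hlt hsq (m / e) hm', hgcd]
    refine Finset.sum_congr rfl fun c _ => ?_
    rw [Nat.div_div_eq_div_mul, Nat.div_div_eq_div_mul]
  rw [Finset.sum_congr rfl hIH]
  -- reindex double sum
  have hreindex :
      ∑ e ∈ g.divisors.erase 1, ∑ c ∈ (g / e).divisors,
          (μ c : ℂ) * (f (m / (e * c)) * f (d / (e * c)))
        = ∑ k ∈ g.divisors, ∑ e ∈ k.divisors.erase 1,
            (μ (k / e) : ℂ) * (f (m / k) * f (d / k)) := by
    rw [Finset.sum_sigma', Finset.sum_sigma']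
    refine Finset.sum_nbij' (fun p => ⟨p.1 * p.2, p.1⟩) (fun q => ⟨q.2, q.1 / q.2⟩)
      ?_ ?_ ?_ ?_ ?_
    · rintro ⟨e, c⟩ hp
      simp only [Finset.mem_sigma, Finset.mem_erase, Nat.mem_divisors] at hp ⊢
      obtain ⟨⟨he1, he_dvd, -⟩, hc_dvd, hge0⟩ := hp
      have he0 : e ≠ 0 := by rintro rfl; simp [Nat.zero_dvd.mp he_dvd] at hg0
      have hkg : e * c ∣ g := by
        have := mul_dvd_mul_left e hc_dvd
        rwa [Nat.mul_div_cancel' he_dvd] at this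
      have hk0 : e * c ≠ 0 := fun h => hg0 (Nat.eq_zero_of_zero_dvd (h ▸ hkg))
      exact ⟨⟨hkg, hg0⟩, ⟨he1, Dvd.intro c rfl, hk0⟩⟩
    · rintro ⟨k, e⟩ hq
      simp only [Finset.mem_sigma, Finset.mem_erase, Nat.mem_divisors] at hq ⊢
      obtain ⟨⟨hk_dvd, -⟩, he1, he_dvd, hk0⟩ := hq
      have he0 : e ≠ 0 := by rintro rfl; simp [Nat.zero_dvd.mp he_dvd] at hk0
      refine ⟨⟨he1, he_dvd.trans hk_dvd, hg0⟩, ?_, ?_⟩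
      · obtain ⟨s, rfl⟩ := he_dvd
        obtain ⟨t, ht⟩ := hk_dvd
        rw [Nat.mul_div_cancel_left _ (Nat.pos_of_ne_zero he0), ht,
          mul_assoc, Nat.mul_div_cancel_left _ (Nat.pos_of_ne_zero he0)]
        exact Dvd.intro t rfl
      · intro h
        exact hg0 (by rw [← Nat.div_mul_cancel ((he_dvd.trans hk_dvd)), h, zero_mul])
    · rintro ⟨e, c⟩ hp
      simp only [Finset.mem_sigma, Finset.mem_erase, Nat.mem_divisors] at hp
      have he0 : e ≠ 0 := by
        rintro rfl; exact hg0 (Nat.eq_zero_of_zero_dvd hp.1.2.1)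
      simp [Nat.mul_div_cancel_left _ (Nat.pos_of_ne_zero he0)]
    · rintro ⟨k, e⟩ hq
      simp only [Finset.mem_sigma, Finset.mem_erase, Nat.mem_divisors] at hq
      simp [Nat.mul_div_cancel' hq.2.2.1]
    · rintro ⟨e, c⟩ hp
      simp only [Finset.mem_sigma, Finset.mem_erase, Nat.mem_divisors] at hp
      have he0 : e ≠ 0 := by
        rintro rfl; exact hg0 (Nat.eq_zero_of_zero_dvd hp.1.2.1)
      simp [Nat.mul_div_cancel_left _ (Nat.pos_of_ne_zero he0)]
  rw [hreindex]
  -- evaluate inner coefficient sums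
  have hinner : ∀ k ∈ g.divisors,
      ∑ e ∈ k.divisors.erase 1, (μ (k / e) : ℂ) * (f (m / k) * f (d / k))
        = ((if k = 1 then 1 else 0) - (μ k : ℂ)) * (f (m / k) * f (d / k)) := by
    intro k hk
    obtain ⟨hk_dvd, -⟩ := Nat.mem_divisors.mp hk
    have hk0 : k ≠ 0 := by rintro rfl; exact hg0 (Nat.eq_zero_of_zero_dvd hk_dvd)
    rw [← Finset.sum_mul, coeff_sum k hk0]
  rw [Finset.sum_congr rfl hinner]
  have hone : ∑ k ∈ g.divisors, (if k = 1 then (1:ℂ) else 0) * (f (m / k) * f (d / k))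
      = f m * f d := by
    rw [Finset.sum_eq_single 1]
    · simp
    · intro k _ hk1; simp [hk1]
    · intro h; exact absurd h1g h
  simp only [sub_mul]
  rw [Finset.sum_sub_distrib, hone]
  ring

theorem hecke_fmd_sq (f : ℕ → ℂ) (hf : HeckeMult f) (d : ℕ) (hd : Squarefree d)
    (m : ℕ) (hm : 0 < m) :
    ‖f (m * d)‖ ^ 2 ≤
      (d.divisors.card : ℝ) *
        ∑ ab ∈ Nat.divisorsAntidiagonal d,
          ‖f ab.1‖ ^ 2 *
            ‖if ab.2 ∣ m then f (m / ab.2) else 0‖ ^ 2 := by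
  have hd0 : 0 < d := Nat.pos_of_ne_zero hd.ne_zero
  set g := Nat.gcd m d with hg
  have hgm : g ∣ m := Nat.gcd_dvd_left m d
  have hgd : g ∣ d := Nat.gcd_dvd_right m d
  have hg0 : g ≠ 0 := Nat.gcd_ne_zero_left hm.ne'
  -- triangle inequality
  have h1 : ‖f (m * d)‖ ≤
      ∑ e ∈ g.divisors, ‖f (m / e)‖ * ‖f (d / e)‖ := by
    rw [hecke_inv f hf d hd m hm]
    refine (norm_sum_le _ _).trans (Finset.sum_le_sum fun e _ => ?_)
    rw [norm_mul, norm_mul]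
    have hμ : ‖((μ e : ℤ) : ℂ)‖ ≤ 1 := by
      rw [Complex.norm_intCast]
      exact_mod_cast abs_moebius_le_one
    calc ‖((μ e : ℤ) : ℂ)‖ * (‖f (m / e)‖ * ‖f (d / e)‖)
        ≤ 1 * (‖f (m / e)‖ * ‖f (d / e)‖) := by
          apply mul_le_mul_of_nonneg_right hμ
          positivity
      _ = _ := one_mul _
  -- Cauchy-Schwarz
  have h2 : ‖f (m * d)‖ ^ 2 ≤
      (g.divisors.card : ℝ) *
        ∑ e ∈ g.divisors, ‖f (d / e)‖ ^ 2 * ‖f (m / e)‖ ^ 2 := by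
    have hCS := sum_mul_sq_le_sq_mul_sq g.divisors (fun _ => (1:ℝ))
      (fun e => ‖f (m / e)‖ * ‖f (d / e)‖)
    simp only [one_pow, one_mul, Finset.sum_const, nsmul_eq_mul, mul_one] at hCS
    calc ‖f (m * d)‖ ^ 2
        ≤ (∑ e ∈ g.divisors, ‖f (m / e)‖ * ‖f (d / e)‖) ^ 2 := by
          apply pow_le_pow_left₀ (norm_nonneg _) h1
      _ ≤ (g.divisors.card : ℝ) *
            ∑ e ∈ g.divisors, (‖f (m / e)‖ * ‖f (d / e)‖) ^ 2 := hCS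
      _ = _ := by
          congr 1
          refine Finset.sum_congr rfl fun e _ => ?_
          ring
  refine h2.trans ?_
  -- compare the two sums and the cardinalities
  have hsub : g.divisors ⊆ d.divisors := Nat.divisors_subset_of_dvd hd.ne_zero hgd
  have hcard : (g.divisors.card : ℝ) ≤ (d.divisors.card : ℝ) := by
    exact_mod_cast Finset.card_le_card hsub
  have hsum : ∑ e ∈ g.divisors, ‖f (d / e)‖ ^ 2 * ‖f (m / e)‖ ^ 2
      ≤ ∑ ab ∈ Nat.divisorsAntidiagonal d,
          ‖f ab.1‖ ^ 2 *
            ‖if ab.2 ∣ m then f (m / ab.2) else 0‖ ^ 2 := by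
    have hinj : ∀ x ∈ g.divisors, ∀ y ∈ g.divisors,
        (fun e => ((d / e, e) : ℕ × ℕ)) x = (fun e => ((d / e, e) : ℕ × ℕ)) y → x = y := by
      intro x _ y _ h
      exact congrArg Prod.snd h
    have himg : ∑ e ∈ g.divisors, ‖f (d / e)‖ ^ 2 * ‖f (m / e)‖ ^ 2
        = ∑ ab ∈ g.divisors.image (fun e => ((d / e, e) : ℕ × ℕ)),
            ‖f ab.1‖ ^ 2 *
              ‖if ab.2 ∣ m then f (m / ab.2) else 0‖ ^ 2 := by
      rw [Finset.sum_image hinj]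
      refine Finset.sum_congr rfl fun e he => ?_
      obtain ⟨he_dvd, -⟩ := Nat.mem_divisors.mp he
      rw [if_pos (he_dvd.trans hgm)]
    rw [himg]
    refine Finset.sum_le_sum_of_subset_of_nonneg ?_ fun ab _ _ => by positivity
    intro ab hab
    obtain ⟨e, he, rfl⟩ := Finset.mem_image.mp hab
    obtain ⟨he_dvd, -⟩ := Nat.mem_divisors.mp he
    rw [Nat.mem_divisorsAntidiagonal]
    exact ⟨Nat.div_mul_cancel (he_dvd.trans hgd), hd.ne_zero⟩
  have hnonneg : (0:ℝ) ≤
      ∑ e ∈ g.divisors, ‖f (d / e)‖ ^ 2 * ‖f (m / e)‖ ^ 2 := by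
    positivity
  exact mul_le_mul hcard hsum hnonneg (Nat.cast_nonneg _)
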